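/- Let n be a positive integer and 1 ≤ k < n/2 an integer. Then there exists a collection X of at most C·(log₂ C(n,k))² subsets of [n] (for some absolute constant C) with the property that for all distinct indices i_1, ..., i_{k+1} ∈ [n] and every j ∈ [k+1], some X ∈ X contains i_j and contains none of the i_ℓ for ℓ ≠ j. -/

import Mathlib

lemma aux_two_mul_pow (m : ℕ) (hm : 1 ≤ m) : 2 * m ^ m ≤ (m + 1) ^ m := by
  have hm' : (0:ℝ) < m := by exact_mod_cast hm
  have h := one_add_mul_le_pow (a := 1/(m:ℝ)) (by linarith [one_div_pos.mpr hm']) m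
  have h2 : (1:ℝ) + m * (1/m) = 2 := by field_simp; norm_num
  rw [h2] at h
  have key : (2:ℝ) * m ^ m ≤ (m+1) ^ m := by
    have hid : ((m:ℝ)+1) = m * (1 + 1/m) := by field_simp
    calc (2:ℝ) * m ^ m ≤ (1 + 1/m)^m * m^m :=
          mul_le_mul_of_nonneg_right h (by positivity)
      _ = (m+1)^m := by rw [hid, mul_pow]; ring
  exact_mod_cast key

lemma aux_half_pow (k : ℕ) (hk : 1 ≤ k) : (2*k) ^ k ≤ 2 * (2*k - 1) ^ k := by
  have hk' : (1:ℝ) ≤ k := by exact_mod_cast hk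
  have hkpos : (0:ℝ) < k := by linarith
  have ha : -2 ≤ -(1/(2*(k:ℝ))) := by
    have : 1/(2*(k:ℝ)) ≤ 1 := by
      rw [div_le_one (by linarith)]; linarith
    linarith
  have h := one_add_mul_le_pow ha k
  have h2 : (1:ℝ) + k * (-(1/(2*k))) = 1/2 := by field_simp; ring
  rw [h2] at h
  have hcast : ((2*k - 1 : ℕ) : ℝ) = 2*(k:ℝ) - 1 := by
    have h1 : 1 ≤ 2*k := by omega
    push_cast [h1]; ring
  have hid : (2*(k:ℝ) - 1) = (2*k) * (1 + -(1/(2*k))) := by field_simp; ring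
  have key : ((2*k:ℕ):ℝ) ^ k ≤ (2:ℝ) * ((2*k - 1:ℕ):ℝ) ^ k := by
    have hc2 : ((2*k:ℕ):ℝ) = 2*(k:ℝ) := by push_cast; ring
    rw [hcast, hid, mul_pow, hc2]
    nlinarith [pow_pos (show (0:ℝ) < 2*(k:ℝ) by linarith) k, pow_nonneg (show (0:ℝ) ≤ 2*(k:ℝ) by linarith) k,
      mul_le_mul_of_nonneg_left h (pow_nonneg (show (0:ℝ) ≤ 2*(k:ℝ) by linarith) k)]
  exact_mod_cast key

lemma aux_n_le_choose : ∀ k n : ℕ, 1 ≤ k → 2 * k < n → n ≤ n.choose k := by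
  intro k
  induction k with
  | zero => omega
  | succ k ih =>
    intro n hk hn
    by_cases h : k = 0
    · subst h; simp [Nat.choose_one_right]
    · have hk1 : 1 ≤ k := by omega
      have h1 : n ≤ n.choose k := ih n hk1 (by omega)
      have h2 : n.choose k ≤ n.choose (k+1) :=
        Nat.choose_le_succ_of_lt_half_left (by omega)
      omega

lemma aux_pow_le_choose : ∀ k n : ℕ, 1 ≤ k → 2 * k < n → 2 ^ k ≤ n.choose k := by
  intro k
  induction k with
  | zero => omega
  | succ k ih =>
    intro n hk hn
    by_cases h : k = 0
    · subst h; simp [Nat.choose_one_right]; omega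
    · have hk1 : 1 ≤ k := by omega
      obtain ⟨m, rfl⟩ : ∃ m, n = m + 1 := ⟨n - 1, by omega⟩
      rw [Nat.choose_succ_succ]
      have h1 : 2^k ≤ m.choose k := ih m hk1 (by omega)
      have h2 : m.choose k ≤ m.choose (k+1) :=
        Nat.choose_le_succ_of_lt_half_left (by omega)
      calc 2^(k+1) = 2^k + 2^k := by ring
        _ ≤ m.choose k + m.choose (k+1) := by omega

lemma aux_exists_good (n k : ℕ) (hk : 1 ≤ k) (hn : 2*k < n) :
    ∃ f : Fin ((4*k-1) * (Nat.log 2 n + Nat.log 2 (n.choose k) + 2)) → Fin n → Fin (2*k),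
      ∀ (a : Fin n) (T : Finset (Fin n)), T.card = k → a ∉ T →
        ∃ t, (f t a : ℕ) = 0 ∧ ∀ x ∈ T, (f t x : ℕ) ≠ 0 := by
  classical
  haveI : NeZero (2*k) := ⟨by omega⟩
  set s : ℕ := Nat.log 2 n + Nat.log 2 (n.choose k) + 2 with hs
  set w : ℕ := (4*k-1) * s with hw
  set A : ℕ := (2*k)^n with hA
  set B : ℕ := (2*k-1)^k * (2*k)^(n-(k+1)) with hB
  set singleGood : Fin n → Finset (Fin n) → Finset (Fin n → Fin (2*k)) :=
    fun a T => Fintype.piFinset (fun x => if x = a then {0} else if x ∈ T then {0}ᶜ else Finset.univ)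
    with hsg
  have mem_singleGood : ∀ (a : Fin n) (T : Finset (Fin n)), a ∉ T → ∀ g,
      g ∈ singleGood a T ↔ ((g a : ℕ) = 0 ∧ ∀ x ∈ T, (g x : ℕ) ≠ 0) := by
    intro a T haT g
    rw [hsg]; rw [Fintype.mem_piFinset]
    have hzero : ∀ y : Fin (2*k), (y : ℕ) = 0 ↔ y = 0 := by
      intro y; rw [Fin.ext_iff]; simp
    constructor
    · intro h
      refine ⟨?_, ?_⟩
      · have := h a; rw [if_pos rfl, Finset.mem_singleton] at this
        rw [hzero]; exact this
      · intro x hx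
        have hxa : x ≠ a := fun h' => haT (h' ▸ hx)
        have := h x
        rw [if_neg hxa, if_pos hx, Finset.mem_compl, Finset.mem_singleton] at this
        rw [Ne, hzero]; exact this
    · rintro ⟨h0, h1⟩ x
      rw [hzero] at h0
      by_cases hxa : x = a
      · subst hxa; simp [h0]
      · by_cases hxT : x ∈ T
        · have := h1 x hxT; rw [Ne, hzero] at this
          simp [hxa, hxT, this]
        · simp [hxa, hxT]
  have card_fin : Fintype.card (Fin n → Fin (2*k)) = A := by
    rw [hA]; simp [Fintype.card_fun]
  have card_singleGood : ∀ (a : Fin n) (T : Finset (Fin n)), T.card = k → a ∉ T →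
      (singleGood a T).card = B := by
    intro a T hTk haT
    rw [hsg]
    simp only []
    rw [Fintype.card_piFinset]
    have hcards : ∀ x : Fin n,
        (if x = a then ({0} : Finset (Fin (2*k))) else if x ∈ T then {0}ᶜ else Finset.univ).card
          = (if x = a then 1 else if x ∈ T then 2*k-1 else 2*k) := by
      intro x
      split_ifs with h1 h2
      · simp
      · simp [Finset.card_compl]
      · simp
    calc (∏ x : Fin n,
          (if x = a then ({0} : Finset (Fin (2*k))) else if x ∈ T then {0}ᶜ else Finset.univ).card)
        = ∏ x : Fin n, (if x = a then 1 else if x ∈ T then 2*k-1 else 2*k) :=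
          Finset.prod_congr rfl (fun x _ => hcards x)
      _ = (∏ x ∈ insert a T, (if x = a then 1 else if x ∈ T then 2*k-1 else 2*k))
          * ∏ x ∈ (insert a T)ᶜ, (if x = a then 1 else if x ∈ T then 2*k-1 else 2*k) :=
          (Finset.prod_mul_prod_compl _ _).symm
      _ = B := by
        have hprod1 : (∏ x ∈ insert a T, (if x = a then 1 else if x ∈ T then 2*k-1 else 2*k))
            = (2*k-1)^k := by
          rw [Finset.prod_insert haT, if_pos rfl, one_mul]
          calc (∏ x ∈ T, (if x = a then 1 else if x ∈ T then 2*k-1 else 2*k))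
              = ∏ _x ∈ T, (2*k-1) := Finset.prod_congr rfl (fun x hx => by
                have hxa : x ≠ a := fun h' => haT (h' ▸ hx)
                rw [if_neg hxa, if_pos hx])
            _ = (2*k-1)^k := by rw [Finset.prod_const, hTk]
        have hprod2 : (∏ x ∈ (insert a T)ᶜ, (if x = a then 1 else if x ∈ T then 2*k-1 else 2*k))
            = (2*k)^(n-(k+1)) := by
          calc (∏ x ∈ (insert a T)ᶜ, (if x = a then 1 else if x ∈ T then 2*k-1 else 2*k))
              = ∏ _x ∈ (insert a T)ᶜ, (2*k) := Finset.prod_congr rfl (fun x hx => by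
                rw [Finset.mem_compl, Finset.mem_insert] at hx
                push_neg at hx
                rw [if_neg hx.1, if_neg hx.2])
            _ = (2*k)^(n-(k+1)) := by
              rw [Finset.prod_const, Finset.card_compl, Finset.card_insert_of_notMem haT, hTk]
              simp
        rw [hprod1, hprod2, hB]
  have hBA : B ≤ A := by
    rw [hA, hB]
    calc (2*k-1)^k * (2*k)^(n-(k+1)) ≤ (2*k)^(k+1) * (2*k)^(n-(k+1)) := by
          apply Nat.mul_le_mul_right
          calc (2*k-1)^k ≤ (2*k)^k := Nat.pow_le_pow_left (by omega) k
            _ ≤ (2*k)^(k+1) := Nat.pow_le_pow_right (by omega) (by omega)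
      _ = (2*k)^n := by rw [← pow_add]; congr 1; omega
  have hAB4 : A ≤ 4*k*B := by
    rw [hA, hB]
    have h1 : (2*k)^n = 2*k * ((2*k)^k * (2*k)^(n-(k+1))) := by
      rw [← pow_add, ← pow_succ']; congr 1; omega
    rw [h1]
    calc 2*k * ((2*k)^k * (2*k)^(n-(k+1)))
        ≤ 2*k * ((2*(2*k-1)^k) * (2*k)^(n-(k+1))) := by
          apply Nat.mul_le_mul_left
          exact Nat.mul_le_mul_right _ (aux_half_pow k hk)
      _ = 4*k*((2*k-1)^k * (2*k)^(n-(k+1))) := by ring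
  set singleBad : Fin n → Finset (Fin n) → Finset (Fin n → Fin (2*k)) :=
    fun a T => (singleGood a T)ᶜ with hsb
  set badSet : Fin n → Finset (Fin n) → Finset (Fin w → Fin n → Fin (2*k)) :=
    fun a T => Fintype.piFinset (fun _ => singleBad a T) with hbs
  have card_badSet : ∀ (a : Fin n) (T : Finset (Fin n)), T.card = k → a ∉ T →
      (badSet a T).card = (A - B)^w := by
    intro a T hTk haT
    rw [hbs]
    simp only []
    rw [Fintype.card_piFinset, Finset.prod_const, Finset.card_univ, Fintype.card_fin]
    congr 1
    rw [hsb]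
    simp only []
    rw [Finset.card_compl, card_fin, card_singleGood a T hTk haT]
  set P : Finset (Fin n × Finset (Fin n)) :=
    Finset.univ.filter (fun p => p.2.card = k ∧ p.1 ∉ p.2) with hP
  have cardP : P.card ≤ n * n.choose k := by
    have hsub : P ⊆ Finset.univ ×ˢ Finset.powersetCard k Finset.univ := by
      intro p hp
      rw [hP, Finset.mem_filter] at hp
      rw [Finset.mem_product, Finset.mem_powersetCard]
      exact ⟨Finset.mem_univ _, Finset.subset_univ _, hp.2.1⟩
    calc P.card ≤ _ := Finset.card_le_card hsub
      _ = n * n.choose k := by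
        simp [Finset.card_powersetCard]
  set Bad : Finset (Fin w → Fin n → Fin (2*k)) := P.biUnion (fun p => badSet p.1 p.2) with hBad
  have cardBad : Bad.card ≤ n * n.choose k * (A - B)^w := by
    calc Bad.card ≤ ∑ p ∈ P, (badSet p.1 p.2).card := Finset.card_biUnion_le
      _ ≤ ∑ _p ∈ P, (A - B)^w := by
          apply Finset.sum_le_sum
          intro p hp
          rw [hP, Finset.mem_filter] at hp
          rw [card_badSet p.1 p.2 hp.2.1 hp.2.2]
      _ = P.card * (A - B)^w := by rw [Finset.sum_const, smul_eq_mul]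
      _ ≤ n * n.choose k * (A - B)^w := Nat.mul_le_mul_right _ cardP
  have hApos : 0 < A := by rw [hA]; positivity
  have hmain : n * n.choose k * (A - B)^w < A^w := by
    have h1 : 4*k*(A-B) ≤ (4*k-1)*A := by
      rw [Nat.mul_sub_left_distrib, Nat.mul_sub_right_distrib, one_mul]
      exact Nat.sub_le_sub_left hAB4 _
    have h2 : 2^s * (4*k-1)^w ≤ (4*k)^w := by
      have hq : 4*k = (4*k-1) + 1 := by omega
      have hqq : 1 ≤ 4*k-1 := by omega
      calc 2^s * (4*k-1)^w = (2 * (4*k-1)^(4*k-1))^s := by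
            rw [hw, pow_mul, mul_pow]
        _ ≤ ((4*k-1+1)^(4*k-1))^s := Nat.pow_le_pow_left (aux_two_mul_pow _ hqq) s
        _ = (4*k)^w := by rw [hw, pow_mul, ← hq]
    have h3 : n * n.choose k < 2^s := by
      have hn1 : n < 2^(Nat.log 2 n + 1) := Nat.lt_pow_succ_log_self (by omega) n
      have hc1 : n.choose k < 2^(Nat.log 2 (n.choose k) + 1) :=
        Nat.lt_pow_succ_log_self (by omega) _
      have hcpos : 0 < n.choose k := Nat.choose_pos (by omega)
      calc n * n.choose k < 2^(Nat.log 2 n + 1) * n.choose k :=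
            mul_lt_mul_of_pos_right hn1 hcpos
        _ ≤ 2^(Nat.log 2 n + 1) * 2^(Nat.log 2 (n.choose k) + 1) :=
            Nat.mul_le_mul_left _ (le_of_lt hc1)
        _ = 2^s := by rw [← pow_add, hs]; congr 1; omega
    have hpos2 : 0 < (4*k-1)^w * A^w :=
      Nat.mul_pos (pow_pos (by omega) w) (pow_pos hApos w)
    have hfin : n * n.choose k * (A-B)^w * (4*k)^w < A^w * (4*k)^w := by
      calc n * n.choose k * (A-B)^w * (4*k)^w
          = n * n.choose k * ((4*k)*(A-B))^w := by rw [mul_pow]; ring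
        _ ≤ n * n.choose k * ((4*k-1)*A)^w :=
            Nat.mul_le_mul_left _ (Nat.pow_le_pow_left h1 w)
        _ = n * n.choose k * ((4*k-1)^w * A^w) := by rw [mul_pow]
        _ < 2^s * ((4*k-1)^w * A^w) := mul_lt_mul_of_pos_right h3 hpos2
        _ = (2^s * (4*k-1)^w) * A^w := by ring
        _ ≤ (4*k)^w * A^w := Nat.mul_le_mul_right _ h2
        _ = A^w * (4*k)^w := mul_comm _ _
    exact lt_of_mul_lt_mul_right hfin (Nat.zero_le _)
  have cardUniv : (Finset.univ : Finset (Fin w → Fin n → Fin (2*k))).card = A^w := by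
    rw [Finset.card_univ, Fintype.card_fun, card_fin, Fintype.card_fin]
  have hne : (Finset.univ \ Bad).Nonempty := by
    rw [Finset.sdiff_nonempty]
    intro hsub
    have h1 := Finset.card_le_card hsub
    rw [cardUniv] at h1
    exact absurd (lt_of_le_of_lt (le_trans h1 cardBad) hmain) (lt_irrefl _)
  obtain ⟨f, hf⟩ := hne
  rw [Finset.mem_sdiff] at hf
  refine ⟨f, ?_⟩
  intro a T hTk haT
  have hfp : f ∉ badSet a T := by
    intro hbad
    exact hf.2 (Finset.mem_biUnion.mpr ⟨(a, T), by
      rw [hP, Finset.mem_filter]; exact ⟨Finset.mem_univ _, hTk, haT⟩, hbad⟩)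
  rw [hbs] at hfp
  simp only [Fintype.mem_piFinset] at hfp
  push_neg at hfp
  obtain ⟨t, ht⟩ := hfp
  rw [hsb] at ht
  simp only [Finset.mem_compl, not_not] at ht
  exact ⟨t, (mem_singleGood a T haT (f t)).mp ht⟩

/-- There is an absolute constant `C` such that for all `n` and `1 ≤ k < n/2` there is a
family `𝒳` of at most `C·(log₂ C(n,k))²` subsets of `[n]` such that for all distinct
`i₁,…,i_{k+1} ∈ [n]` and every `j`, some `X ∈ 𝒳` contains `i_j` and none of the other
`i_ℓ`. -/
theorem stmt17 :
    ∃ C : ℝ, 0 < C ∧ ∀ n k : ℕ, 1 ≤ k → 2 * k < n →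
      ∃ 𝒳 : Finset (Finset (Fin n)),
        (𝒳.card : ℝ) ≤ C * (Real.logb 2 (n.choose k : ℝ)) ^ 2 ∧
        ∀ i : Fin (k + 1) → Fin n, Function.Injective i →
          ∀ j : Fin (k + 1), ∃ X ∈ 𝒳, i j ∈ X ∧ ∀ l : Fin (k + 1), l ≠ j → i l ∉ X := by
  classical
  refine ⟨16, by norm_num, ?_⟩
  intro n k hk hn
  obtain ⟨f, hf⟩ := aux_exists_good n k hk hn
  have hw : True := trivial
  set 𝒳 : Finset (Finset (Fin n)) :=
    Finset.image (fun t : Fin ((4*k-1) * (Nat.log 2 n + Nat.log 2 (n.choose k) + 2)) => Finset.univ.filter (fun x => (f t x : ℕ) = 0)) Finset.univ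
    with hX
  refine ⟨𝒳, ?_, ?_⟩
  · -- cardinality bound
    set L : ℝ := Real.logb 2 (n.choose k : ℝ) with hL
    have hcard : 𝒳.card ≤ (4*k-1) * (Nat.log 2 n + Nat.log 2 (n.choose k) + 2) := by
      calc 𝒳.card ≤ (Finset.univ : Finset (Fin ((4*k-1) * (Nat.log 2 n + Nat.log 2 (n.choose k) + 2)))).card :=
            Finset.card_image_le
        _ = _ := by rw [Finset.card_univ, Fintype.card_fin]
    have hchoose_n : (n : ℝ) ≤ (n.choose k : ℝ) := by
      exact_mod_cast aux_n_le_choose k n hk hn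
    have hchoose_pow : ((2:ℝ)^k) ≤ (n.choose k : ℝ) := by
      exact_mod_cast aux_pow_le_choose k n hk hn
    have hnpos : (0:ℝ) < n := by
      have : 0 < n := by omega
      exact_mod_cast this
    have hn3 : (3:ℝ) ≤ n := by
      have : 3 ≤ n := by omega
      exact_mod_cast this
    have hLn : Real.logb 2 n ≤ L := by
      rw [hL]
      exact Real.logb_le_logb_of_le (by norm_num) hnpos hchoose_n
    have hL1 : 1 ≤ L := by
      have h2 : Real.logb 2 2 ≤ Real.logb 2 n :=
        Real.logb_le_logb_of_le (by norm_num) (by norm_num) (by linarith)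
      rw [Real.logb_self_eq_one (by norm_num)] at h2
      linarith
    have hLk : (k:ℝ) ≤ L := by
      have h2 : Real.logb 2 ((2:ℝ)^k) ≤ L :=
        Real.logb_le_logb_of_le (by norm_num) (by positivity) hchoose_pow
      rw [Real.logb_pow, Real.logb_self_eq_one (by norm_num)] at h2
      linarith
    have hlogn : ((Nat.log 2 n : ℕ):ℝ) ≤ Real.logb 2 n := Real.natLog_le_logb n 2
    have hlogc : ((Nat.log 2 (n.choose k) : ℕ):ℝ) ≤ L := by
      rw [hL]; exact Real.natLog_le_logb _ 2
    have hwR : (((4*k-1) * (Nat.log 2 n + Nat.log 2 (n.choose k) + 2) : ℕ):ℝ) ≤ 16 * L^2 := by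
      have hcast : (((4*k-1) * (Nat.log 2 n + Nat.log 2 (n.choose k) + 2) : ℕ):ℝ)
          = ((4*k-1:ℕ):ℝ) * ((Nat.log 2 n + Nat.log 2 (n.choose k) + 2 : ℕ):ℝ) := by
        push_cast; ring
      have h1 : ((4*k-1:ℕ):ℝ) ≤ 4*L := by
        have e : ((4*k-1:ℕ):ℝ) ≤ 4*(k:ℝ) := by
          have : (4*k-1:ℕ) ≤ 4*k := by omega
          calc ((4*k-1:ℕ):ℝ) ≤ ((4*k:ℕ):ℝ) := by exact_mod_cast this
            _ = 4*(k:ℝ) := by push_cast; ring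
        linarith
      have h2 : ((Nat.log 2 n + Nat.log 2 (n.choose k) + 2 : ℕ):ℝ) ≤ 4*L := by
        push_cast
        linarith
      rw [hcast]
      have hnn1 : (0:ℝ) ≤ ((4*k-1:ℕ):ℝ) := Nat.cast_nonneg _
      nlinarith
    have hc' : (𝒳.card : ℝ) ≤ (((4*k-1) * (Nat.log 2 n + Nat.log 2 (n.choose k) + 2) : ℕ):ℝ) := by
      exact_mod_cast hcard
    exact le_trans hc' hwR
  · -- separating property
    intro i hi j
    set a : Fin n := i j with ha
    set T : Finset (Fin n) := (Finset.univ.erase j).image i with hT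
    have hTk : T.card = k := by
      rw [hT, Finset.card_image_of_injective _ hi, Finset.card_erase_of_mem (Finset.mem_univ _),
        Finset.card_univ, Fintype.card_fin]
      omega
    have haT : a ∉ T := by
      rw [hT]
      intro hmem
      obtain ⟨l, hl, hli⟩ := Finset.mem_image.mp hmem
      have : l = j := hi hli
      subst this
      exact (Finset.mem_erase.mp hl).1 rfl
    obtain ⟨t, h0, h1⟩ := hf a T hTk haT
    refine ⟨Finset.univ.filter (fun x => (f t x : ℕ) = 0), ?_, ?_, ?_⟩
    · rw [hX]
      exact Finset.mem_image.mpr ⟨t, Finset.mem_univ _, rfl⟩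
    · exact Finset.mem_filter.mpr ⟨Finset.mem_univ _, h0⟩
    · intro l hl hmem
      have hilT : i l ∈ T := by
        rw [hT]
        exact Finset.mem_image.mpr ⟨l, Finset.mem_erase.mpr ⟨hl, Finset.mem_univ _⟩, rfl⟩
      exact h1 (i l) hilT (Finset.mem_filter.mp hmem).2
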